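/- Let q be a prime power, m = ord_n(q) ≥ 2, and 0 ≤ j ≤ ⌊m/2⌋. If 1 ≤ x ≤ ⌊κ⌋ − 1 where κ = n(q^⌈m/2⌉ − 1 − (q−2)[m odd])/(q^m − 1), then 1 ≤ x·q^j < n, and moreover n − x·q^{⌊m/2⌋} ≥ ⌊κ⌋. -/

import Mathlib

/-- central inequality for Euclidean dual containment: with
`m = ord_n(q) ≥ 2`, `0 ≤ j ≤ ⌊m/2⌋`, and
`κ = n(q^⌈m/2⌉ − 1 − (q−2)[m odd])/(q^m − 1)`, if `1 ≤ x ≤ ⌊κ⌋ − 1` then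
`1 ≤ x·q^j < n` and `n − x·q^{⌊m/2⌋} ≥ ⌊κ⌋`. -/
theorem euclidean_core_estimate (n q m x j : ℕ)
    (hq : IsPrimePow q) (hn : 0 < n) (hcop : Nat.Coprime n q)
    (hm : m = orderOf (q : ZMod n)) (hm2 : 2 ≤ m)
    (hj : j ≤ m / 2)
    (hx1 : 1 ≤ x)
    (hx2 : x ≤ ⌊(n : ℝ) * ((q : ℝ) ^ ((m + 1) / 2) - 1 -
        ((q : ℝ) - 2) * (if Odd m then 1 else 0)) / ((q : ℝ) ^ m - 1)⌋₊ - 1) :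
    1 ≤ x * q ^ j ∧ x * q ^ j < n ∧
      ⌊(n : ℝ) * ((q : ℝ) ^ ((m + 1) / 2) - 1 -
        ((q : ℝ) - 2) * (if Odd m then 1 else 0)) / ((q : ℝ) ^ m - 1)⌋₊ ≤
        n - x * q ^ (m / 2) := by
  have hq2 : 2 ≤ q := hq.two_le
  set a := m / 2 with ha
  set c := (m + 1) / 2 with hc
  set κ : ℝ := (n : ℝ) * ((q : ℝ) ^ c - 1 -
      ((q : ℝ) - 2) * (if Odd m then 1 else 0)) / ((q : ℝ) ^ m - 1) with hκ
  set K := ⌊κ⌋₊ with hKdef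
  -- basic facts
  have hq2R : (2 : ℝ) ≤ (q : ℝ) := by exact_mod_cast hq2
  have hQ1 : (1 : ℝ) ≤ (q : ℝ) ^ a := by
    have := Nat.one_le_pow a q (by omega)
    exact_mod_cast this
  have hQ0 : (0 : ℝ) ≤ (q : ℝ) ^ a := by positivity
  -- n divides q^m - 1
  have horder : (q : ZMod n) ^ m = 1 := by rw [hm]; exact pow_orderOf_eq_one _
  have hqm1 : 1 ≤ q ^ m := Nat.one_le_pow _ _ (by omega)
  have hdvd : n ∣ q ^ m - 1 := by
    rw [← ZMod.natCast_eq_zero_iff]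
    push_cast [Nat.cast_sub hqm1]
    rw [horder]; ring
  have hqm_big : n + 1 ≤ q ^ m := by
    have : n ≤ q ^ m - 1 := Nat.le_of_dvd (by
      have : 2 ^ 2 ≤ q ^ m := Nat.pow_le_pow_left hq2 2 |>.trans
        (Nat.pow_le_pow_right (by omega) hm2)
      omega) hdvd
    omega
  have hnR : (n : ℝ) ≤ (q : ℝ) ^ m - 1 := by
    have : ((n : ℕ) : ℝ) + 1 ≤ ((q ^ m : ℕ) : ℝ) := by exact_mod_cast hqm_big
    push_cast at this; linarith
  have hden : (0 : ℝ) < (q : ℝ) ^ m - 1 := by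
    have : (1 : ℝ) ≤ (n : ℝ) := by exact_mod_cast hn
    linarith
  -- the key real inequality
  have hkey : κ * (1 + (q : ℝ) ^ a) ≤ (n : ℝ) + (q : ℝ) ^ a := by
    rw [hκ, div_mul_eq_mul_div, div_le_iff₀ hden]
    rcases Nat.even_or_odd m with he | ho
    · have hme : m = a + a := by
        have := Nat.even_iff.mp he; omega
      have hce : c = a := by have := Nat.even_iff.mp he; omega
      rw [if_neg (Nat.not_odd_iff_even.mpr he), hce, hme]
      have hpow : (q : ℝ) ^ (a + a) = (q : ℝ) ^ a * (q : ℝ) ^ a := by ring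
      have hnR' := hnR
      rw [hme, hpow] at hnR'
      rw [hpow]
      nlinarith [hQ0, hQ1]
    · have hmo : m = a + a + 1 := by
        have := Nat.odd_iff.mp ho; omega
      have hco : c = a + 1 := by have := Nat.odd_iff.mp ho; omega
      rw [if_pos ho, hco, hmo]
      have hpow : (q : ℝ) ^ (a + a + 1) = (q : ℝ) * (q : ℝ) ^ a * (q : ℝ) ^ a := by
        ring
      have hpow2 : (q : ℝ) ^ (a + 1) = (q : ℝ) * (q : ℝ) ^ a := by ring
      have hnR' := hnR
      rw [hmo, hpow] at hnR'
      rw [hpow, hpow2]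
      have hqa : (q : ℝ) ≤ (q : ℝ) ^ a := by
        calc (q : ℝ) = (q : ℝ) ^ 1 := (pow_one _).symm
        _ ≤ (q : ℝ) ^ a := pow_le_pow_right₀ (by linarith) (by omega)
      have hn1 : (1 : ℝ) ≤ (n : ℝ) := by exact_mod_cast hn
      nlinarith [mul_nonneg hQ0 (sub_nonneg.mpr hnR'),
        mul_nonneg (le_trans zero_le_one hn1) (sub_nonneg.mpr hq2R), hQ1]
  -- floor facts
  have hK2 : 2 ≤ K := by omega
  have hκ0 : 0 ≤ κ := by
    by_contra h
    push_neg at h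
    have : K = 0 := Nat.floor_eq_zero.mpr (by linarith)
    omega
  have hKκ : (K : ℝ) ≤ κ := Nat.floor_le hκ0
  have hxκ : (x : ℝ) ≤ κ - 1 := by
    have h1 : x + 1 ≤ K := by omega
    have h2 : ((x : ℕ) : ℝ) + 1 ≤ (K : ℝ) := by exact_mod_cast h1
    linarith
  -- main nat inequality
  have hmain : K + x * q ^ a ≤ n := by
    have h1 : ((K + x * q ^ a : ℕ) : ℝ) ≤ (n : ℝ) := by
      push_cast
      nlinarith [mul_le_mul_of_nonneg_right hxκ hQ0, hkey, hKκ]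
    exact_mod_cast h1
  have hxa : x * q ^ j ≤ x * q ^ a :=
    Nat.mul_le_mul_left x (Nat.pow_le_pow_right (by omega) hj)
  have hpos : 1 ≤ x * q ^ j := Nat.mul_pos hx1 (Nat.pow_pos (by omega))
  exact ⟨hpos, by omega, by omega⟩
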